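/- arXiv:1609.01869 — 3 statements merged into one kernel-verified Lean document; each statement's English description precedes it below -/
import Mathlib

section
/- Let p > 1, s ∈ (0,1), and u ∈ Ẇ^{s,p}(ℝ^N). For R > 0, R^N ∫_{B_{4R}^c} |u(x)|^p / |x|^{N+ps} dx ≤ C(N,p,s) ∫_{B_{3R} \ B_{2R}} ( |D^s u|^p(x) + |u(x)|^p / R^{ps} ) dx. -/
open MeasureTheory Metric
open scoped ENNReal

/-- Fractional energy density `|D^s u|^p (x)`. -/
noncomputable def Dsp (N : ℕ) (s p : ℝ) (u : EuclideanSpace ℝ (Fin N) → ℝ)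
    (x : EuclideanSpace ℝ (Fin N)) : ℝ≥0∞ :=
  ∫⁻ y, ENNReal.ofReal (|u x - u y| ^ p / ‖x - y‖ ^ ((N : ℝ) + p * s))

/-- Gagliardo seminorm to the `p`-th power. -/
noncomputable def gaglP (N : ℕ) (s p : ℝ) (u : EuclideanSpace ℝ (Fin N) → ℝ) : ℝ≥0∞ :=
  ∫⁻ x, Dsp N s p u x

private lemma abs_rpow_le_aux {p : ℝ} (hp : 0 < p) (a b : ℝ) :
    |a| ^ p ≤ 2 ^ p * (|a - b| ^ p + |b| ^ p) := by
  set m := max |a - b| |b| with hm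
  have hm0 : 0 ≤ m := le_trans (abs_nonneg _) (le_max_left _ _)
  have h2 : |a| ≤ 2 * m := by
    have h1 : |a| ≤ |a - b| + |b| := by
      calc |a| = |a - b + b| := by ring_nf
      _ ≤ |a - b| + |b| := abs_add_le _ _
    have := le_max_left |a - b| |b|
    have := le_max_right |a - b| |b|
    linarith
  have h3 : |a| ^ p ≤ (2 * m) ^ p := Real.rpow_le_rpow (abs_nonneg a) h2 hp.le
  have h4 : (2 * m) ^ p = 2 ^ p * m ^ p := Real.mul_rpow (by norm_num) hm0
  have h5 : m ^ p ≤ |a - b| ^ p + |b| ^ p := by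
    rcases max_choice |a - b| |b| with h | h <;> rw [hm, h]
    · nlinarith [Real.rpow_nonneg (abs_nonneg b) p]
    · nlinarith [Real.rpow_nonneg (abs_nonneg (a - b)) p]
  calc |a| ^ p ≤ 2 ^ p * m ^ p := by rw [← h4]; exact h3
  _ ≤ 2 ^ p * (|a - b| ^ p + |b| ^ p) := by
      have h2p : (0:ℝ) ≤ 2 ^ p := Real.rpow_nonneg (by norm_num) p
      nlinarith

private lemma inv_rpow_le_aux {α a b : ℝ} (hα : 0 < α) (ha : 0 < a) (hb : 0 < b)
    (h : b ≤ 2 * a) : (a ^ α)⁻¹ ≤ 2 ^ α * (b ^ α)⁻¹ := by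
  have h1 : b ^ α ≤ 2 ^ α * a ^ α := by
    rw [← Real.mul_rpow (by norm_num) ha.le]
    exact Real.rpow_le_rpow hb.le h hα.le
  have ha' : 0 < a ^ α := Real.rpow_pos_of_pos ha α
  have hb' : 0 < b ^ α := Real.rpow_pos_of_pos hb α
  have h2' : (0:ℝ) < 2 ^ α := Real.rpow_pos_of_pos (by norm_num) α
  rw [← div_eq_mul_inv, inv_eq_one_div, div_le_div_iff₀ ha' hb']
  nlinarith

set_option maxHeartbeats 2000000 in
/-- `R^N ∫_{B_{4R}^c} |u(x)|^p/|x|^{N+ps} dx ≤ C ∫_{B_{3R}∖B_{2R}} (|D^s u|^p + |u|^p/R^{ps})`. -/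
theorem stmt6 (N : ℕ) (p s : ℝ) (hp : 1 < p) (hs0 : 0 < s) (hs1 : s < 1) :
    ∃ C > 0, ∀ (u : EuclideanSpace ℝ (Fin N) → ℝ) (R : ℝ), 0 < R →
      Measurable u → gaglP N s p u < ⊤ →
      ENNReal.ofReal (R ^ (N : ℝ)) *
          (∫⁻ x in (ball (0 : EuclideanSpace ℝ (Fin N)) (4 * R))ᶜ,
            ENNReal.ofReal (|u x| ^ p / ‖x‖ ^ ((N : ℝ) + p * s))) ≤
        ENNReal.ofReal C *
          ∫⁻ x in ball (0 : EuclideanSpace ℝ (Fin N)) (3 * R) \ ball 0 (2 * R),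
            (Dsp N s p u x + ENNReal.ofReal (|u x| ^ p / R ^ (p * s))) := by
  have hp0 : (0:ℝ) < p := lt_trans one_pos hp
  by_cases hN : N = 0
  · subst hN
    refine ⟨1, one_pos, fun u R hR hu hg => ?_⟩
    have hball : ball (0 : EuclideanSpace ℝ (Fin 0)) (4 * R) = Set.univ := by
      ext x
      simp [mem_ball, Subsingleton.elim x 0, dist_self]
      positivity
    rw [hball, Set.compl_univ]
    simp
  -- N ≥ 1
  set E := EuclideanSpace ℝ (Fin N)
  set α : ℝ := (N : ℝ) + p * s with hα
  have hα0 : (0:ℝ) < α := by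
    have h1 : (0:ℝ) ≤ (N:ℝ) := Nat.cast_nonneg N
    have h2 := mul_pos hp0 hs0
    rw [hα]; linarith
  have hNfr : Module.finrank ℝ E = N := finrank_euclideanSpace_fin
  have hNT : Nontrivial E := by
    have hpos : 0 < Module.finrank ℝ E := by rw [hNfr]; omega
    exact Module.nontrivial_of_finrank_pos hpos
  set v : ℝ≥0∞ := volume (ball (0 : E) 1) with hv
  have hv0 : v ≠ 0 := (measure_ball_pos volume 0 one_pos).ne'
  have hvt : v ≠ ⊤ := measure_ball_lt_top.ne
  -- the reference integral over the complement of the ball of radius 4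
  set S1 : ℝ≥0∞ := ∫⁻ y in (ball (0 : E) 4)ᶜ, ENNReal.ofReal (‖y‖ ^ (-α)) with hS1def
  have hS1 : S1 ≠ ⊤ := by
    have hfr : (Module.finrank ℝ E : ℝ) < α := by
      rw [hNfr, hα]
      nlinarith
    have hb : S1 ≤ ENNReal.ofReal (2 ^ α) * ∫⁻ y : E, ENNReal.ofReal ((1 + ‖y‖) ^ (-α)) := by
      rw [hS1def]
      calc ∫⁻ y in (ball (0 : E) 4)ᶜ, ENNReal.ofReal (‖y‖ ^ (-α))
          ≤ ∫⁻ y in (ball (0 : E) 4)ᶜ,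
              ENNReal.ofReal (2 ^ α) * ENNReal.ofReal ((1 + ‖y‖) ^ (-α)) := by
            refine setLIntegral_mono (by fun_prop) (fun y hy => ?_)
            rw [Set.mem_compl_iff, mem_ball_zero_iff, not_lt] at hy
            have hy0 : (0:ℝ) < ‖y‖ := by linarith
            have hy1 : (0:ℝ) < 1 + ‖y‖ := by linarith
            rw [← ENNReal.ofReal_mul (Real.rpow_nonneg (by norm_num) α)]
            refine ENNReal.ofReal_le_ofReal ?_
            rw [Real.rpow_neg hy0.le, Real.rpow_neg hy1.le]
            exact inv_rpow_le_aux hα0 hy0 hy1 (by linarith)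
        _ ≤ ∫⁻ y : E, ENNReal.ofReal (2 ^ α) * ENNReal.ofReal ((1 + ‖y‖) ^ (-α)) :=
            setLIntegral_le_lintegral _ _
        _ = ENNReal.ofReal (2 ^ α) * ∫⁻ y : E, ENNReal.ofReal ((1 + ‖y‖) ^ (-α)) :=
            lintegral_const_mul _ (by fun_prop)
    refine ne_top_of_le_ne_top ?_ hb
    exact (ENNReal.mul_lt_top ENNReal.ofReal_lt_top (finite_integral_one_add_norm hfr)).ne
  -- scaling identity
  have hscale : ∀ R : ℝ, 0 < R →
      (∫⁻ x in (ball (0 : E) (4 * R))ᶜ, ENNReal.ofReal (‖x‖ ^ (-α)))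
        = ENNReal.ofReal (R ^ (-(p * s))) * S1 := by
    intro R hR
    have hmeas : Measurable fun x : E => ENNReal.ofReal (‖x‖ ^ (-α)) := by fun_prop
    have hKm : MeasurableSet ((ball (0 : E) (4 * R))ᶜ) := measurableSet_ball.compl
    set h : E → ℝ≥0∞ := ((ball (0 : E) (4 * R))ᶜ).indicator fun x => ENNReal.ofReal (‖x‖ ^ (-α))
      with hh
    have hhm : Measurable h := hmeas.indicator hKm
    have e1 : (∫⁻ x in (ball (0 : E) (4 * R))ᶜ, ENNReal.ofReal (‖x‖ ^ (-α))) = ∫⁻ x, h x := by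
      rw [hh, lintegral_indicator hKm]
    have e2 : (∫⁻ y, h (R • y)) =
        ENNReal.ofReal (|((R : ℝ) ^ Module.finrank ℝ E)⁻¹|) * ∫⁻ x, h x := by
      rw [← lintegral_map hhm (measurable_const_smul R), Measure.map_addHaar_smul volume hR.ne',
        lintegral_smul_measure, smul_eq_mul]
    have e3 : ∀ y : E, h (R • y) =
        ((ball (0 : E) 4)ᶜ).indicator (fun y => ENNReal.ofReal (R ^ (-α) * ‖y‖ ^ (-α))) y := by
      intro y
      have hmem : (R • y ∈ (ball (0 : E) (4 * R))ᶜ) ↔ (y ∈ (ball (0 : E) 4)ᶜ) := by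
        rw [Set.mem_compl_iff, Set.mem_compl_iff, mem_ball_zero_iff, mem_ball_zero_iff,
          norm_smul, Real.norm_eq_abs, abs_of_pos hR]
        constructor
        · intro hh1 hh2; exact hh1 (by nlinarith)
        · intro hh1 hh2; exact hh1 (by nlinarith)
      have hval : ENNReal.ofReal (‖R • y‖ ^ (-α)) = ENNReal.ofReal (R ^ (-α) * ‖y‖ ^ (-α)) := by
        rw [norm_smul, Real.norm_eq_abs, abs_of_pos hR,
          Real.mul_rpow hR.le (norm_nonneg y)]
      rw [hh]
      by_cases hy : y ∈ (ball (0 : E) 4)ᶜ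
      · rw [Set.indicator_of_mem (hmem.mpr hy), Set.indicator_of_mem hy]
        exact hval
      · rw [Set.indicator_of_notMem (fun hc => hy (hmem.mp hc)), Set.indicator_of_notMem hy]
    have e4 : (∫⁻ y, h (R • y)) = ENNReal.ofReal (R ^ (-α)) * S1 := by
      simp_rw [e3]
      rw [lintegral_indicator measurableSet_ball.compl, hS1def]
      rw [← lintegral_const_mul _ (by fun_prop)]
      refine lintegral_congr fun y => ?_
      rw [← ENNReal.ofReal_mul (Real.rpow_nonneg hR.le _)]
    have hRN : (0:ℝ) < R ^ Module.finrank ℝ E := pow_pos hR _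
    have e5 : ENNReal.ofReal (R ^ Module.finrank ℝ E) *
        ENNReal.ofReal (|((R : ℝ) ^ Module.finrank ℝ E)⁻¹|) = 1 := by
      rw [← ENNReal.ofReal_mul (le_of_lt hRN), abs_of_pos (inv_pos.mpr hRN),
        mul_inv_cancel₀ hRN.ne']
      exact ENNReal.ofReal_one
    have e6 : (∫⁻ x, h x) = ENNReal.ofReal (R ^ Module.finrank ℝ E) * (∫⁻ y, h (R • y)) := by
      rw [e2, ← mul_assoc, e5, one_mul]
    rw [e1, e6, e4, ← mul_assoc, ← ENNReal.ofReal_mul (pow_pos hR _).le]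
    congr 2
    rw [hNfr, ← Real.rpow_natCast R N, ← Real.rpow_add hR]
    congr 1
    rw [hα]; ring
  -- constants
  set c1 : ℝ := 2 ^ p * 2 ^ α with hc1
  have hc1_0 : (0:ℝ) ≤ c1 := by rw [hc1]; positivity
  set D : ℝ≥0∞ := ENNReal.ofReal c1 + ENNReal.ofReal (2 ^ p) * S1 with hD
  have hDt : D ≠ ⊤ := by
    rw [hD]
    exact (ENNReal.add_lt_top.mpr ⟨ENNReal.ofReal_lt_top,
      ENNReal.mul_lt_top ENNReal.ofReal_lt_top hS1.lt_top⟩).ne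
  set cN : ℝ := 3 ^ N - 2 ^ N with hcN
  have hcN0 : (0:ℝ) < cN := by
    rw [hcN]
    have : (2:ℝ) ^ N < 3 ^ N := pow_lt_pow_left₀ (by norm_num) (by norm_num) hN
    linarith
  set k : ℝ≥0∞ := ENNReal.ofReal cN * v with hk
  have hk0 : k ≠ 0 := by
    rw [hk]
    exact mul_ne_zero (by simpa using hcN0) hv0
  have hkt : k ≠ ⊤ := by
    rw [hk]
    exact ENNReal.mul_ne_top ENNReal.ofReal_ne_top hvt
  have hDk : D / k ≠ ⊤ := (ENNReal.div_lt_top hDt hk0).ne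
  refine ⟨(D / k).toReal + 1, by positivity, fun u R hR hu _hg => ?_⟩
  set A : Set E := ball (0 : E) (3 * R) \ ball 0 (2 * R) with hA
  set K : Set E := (ball (0 : E) (4 * R))ᶜ with hK
  set G : E → E → ℝ≥0∞ := fun x z => ENNReal.ofReal (|u x - u z| ^ p / ‖x - z‖ ^ α) with hG
  have hG2 : Measurable fun q : E × E => ENNReal.ofReal (|u q.1 - u q.2| ^ p / ‖q.1 - q.2‖ ^ α) :=
    by fun_prop
  have hGx : ∀ x : E, Measurable (G x) := fun x =>
    hG2.comp (measurable_const.prodMk measurable_id)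
  set W : ℝ≥0∞ := ∫⁻ z in A, ENNReal.ofReal (|u z| ^ p) with hW
  set T : ℝ≥0∞ := ∫⁻ x in K, ENNReal.ofReal (|u x| ^ p / ‖x‖ ^ α) with hT
  set J : ℝ≥0∞ :=
    ∫⁻ z in A, (Dsp N s p u z + ENNReal.ofReal (|u z| ^ p / R ^ (p * s))) with hJ
  -- pointwise estimate
  have core : ∀ x z : E, x ∈ K → z ∈ A →
      ENNReal.ofReal (|u x| ^ p / ‖x‖ ^ α) ≤
        ENNReal.ofReal c1 * G x z +
          ENNReal.ofReal ((2:ℝ) ^ p) * ENNReal.ofReal (‖x‖ ^ (-α)) *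
            ENNReal.ofReal (|u z| ^ p) := by
    intro x z hx hz
    rw [hK, Set.mem_compl_iff, mem_ball_zero_iff, not_lt] at hx
    rw [hA] at hz
    have hz3 : ‖z‖ < 3 * R := by
      have h1 := hz.1
      rwa [mem_ball_zero_iff] at h1
    have hxpos : (0:ℝ) < ‖x‖ := by linarith
    have hzx : ‖x - z‖ ≤ 2 * ‖x‖ := by
      have := norm_sub_le x z
      linarith
    have hxz0 : (0:ℝ) < ‖x - z‖ := by
      have := norm_sub_norm_le x z
      linarith
    have e1 := abs_rpow_le_aux hp0 (u x) (u z)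
    have e2 := inv_rpow_le_aux hα0 hxpos hxz0 hzx
    have claim : |u x| ^ p / ‖x‖ ^ α ≤
        c1 * (|u x - u z| ^ p / ‖x - z‖ ^ α) + 2 ^ p * ‖x‖ ^ (-α) * |u z| ^ p := by
      rw [Real.rpow_neg hxpos.le, div_eq_mul_inv, div_eq_mul_inv, hc1]
      have hix : (0:ℝ) ≤ (‖x‖ ^ α)⁻¹ :=
        inv_nonneg.mpr (Real.rpow_nonneg (norm_nonneg x) α)
      have hA1 := mul_le_mul_of_nonneg_right e1 hix
      have ht0 : (0:ℝ) ≤ 2 ^ p * |u x - u z| ^ p := by positivity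
      have hA2 := mul_le_mul_of_nonneg_left e2 ht0
      nlinarith [hA1, hA2]
    calc ENNReal.ofReal (|u x| ^ p / ‖x‖ ^ α)
        ≤ ENNReal.ofReal
            (c1 * (|u x - u z| ^ p / ‖x - z‖ ^ α) + 2 ^ p * ‖x‖ ^ (-α) * |u z| ^ p) :=
          ENNReal.ofReal_le_ofReal claim
      _ = _ := by
          rw [ENNReal.ofReal_add (by positivity) (by positivity)]
          congr 1
          · exact ENNReal.ofReal_mul hc1_0
          · rw [ENNReal.ofReal_mul (by positivity : (0:ℝ) ≤ 2 ^ p * ‖x‖ ^ (-α)),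
              ENNReal.ofReal_mul (by positivity : (0:ℝ) ≤ (2:ℝ) ^ p)]
  have hg_meas : Measurable fun x : E => ∫⁻ z in A, G x z :=
    Measurable.lintegral_prod_right (f := G) hG2
  -- step 1: pointwise-in-x integrated bound
  have step1 : ∀ x ∈ K, volume A * ENNReal.ofReal (|u x| ^ p / ‖x‖ ^ α) ≤
      ENNReal.ofReal c1 * (∫⁻ z in A, G x z) +
        ENNReal.ofReal ((2:ℝ) ^ p) * ENNReal.ofReal (‖x‖ ^ (-α)) * W := by
    intro x hx
    calc volume A * ENNReal.ofReal (|u x| ^ p / ‖x‖ ^ α)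
        = ∫⁻ _ in A, ENNReal.ofReal (|u x| ^ p / ‖x‖ ^ α) := by
          rw [setLIntegral_const, mul_comm]
      _ ≤ ∫⁻ z in A, (ENNReal.ofReal c1 * G x z +
            ENNReal.ofReal ((2:ℝ) ^ p) * ENNReal.ofReal (‖x‖ ^ (-α)) *
              ENNReal.ofReal (|u z| ^ p)) :=
          setLIntegral_mono (((hGx x).const_mul _).add (by fun_prop))
            (fun z hz => core x z hx hz)
      _ = _ := by
          rw [lintegral_add_left ((hGx x).const_mul _), lintegral_const_mul _ (hGx x),
            lintegral_const_mul _ (by fun_prop), hW]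
  -- step 2: integrate over K
  have step2 : volume A * T ≤
      ENNReal.ofReal c1 * (∫⁻ x in K, ∫⁻ z in A, G x z) +
        ENNReal.ofReal ((2:ℝ) ^ p) * W *
          (∫⁻ x in K, ENNReal.ofReal (‖x‖ ^ (-α))) := by
    calc volume A * T = ∫⁻ x in K, volume A * ENNReal.ofReal (|u x| ^ p / ‖x‖ ^ α) := by
          rw [hT, lintegral_const_mul _ (by fun_prop)]
      _ ≤ ∫⁻ x in K, (ENNReal.ofReal c1 * (∫⁻ z in A, G x z) +
            ENNReal.ofReal ((2:ℝ) ^ p) * ENNReal.ofReal (‖x‖ ^ (-α)) * W) :=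
          setLIntegral_mono ((hg_meas.const_mul _).add (by fun_prop)) step1
      _ = _ := by
          rw [lintegral_add_left (hg_meas.const_mul _), lintegral_const_mul _ hg_meas]
          congr 1
          have hre : ∀ x : E,
              ENNReal.ofReal ((2:ℝ) ^ p) * ENNReal.ofReal (‖x‖ ^ (-α)) * W =
              ENNReal.ofReal ((2:ℝ) ^ p) * W * ENNReal.ofReal (‖x‖ ^ (-α)) := by
            intro x; ring
          simp_rw [hre]
          rw [lintegral_const_mul _ (by fun_prop)]
  -- step 3: Fubini and comparison with the Gagliardo density
  have swap : (∫⁻ x in K, ∫⁻ z in A, G x z) = ∫⁻ z in A, ∫⁻ x in K, G x z :=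
    lintegral_lintegral_swap hG2.aemeasurable
  have step3 : (∫⁻ z in A, ∫⁻ x in K, G x z) ≤ ∫⁻ z in A, Dsp N s p u z := by
    refine lintegral_mono fun z => ?_
    have hGsymm : ∀ x : E,
        G x z = ENNReal.ofReal (|u z - u x| ^ p / ‖z - x‖ ^ ((N:ℝ) + p * s)) := by
      intro x
      simp only [hG]
      rw [abs_sub_comm, norm_sub_rev, hα]
    calc (∫⁻ x in K, G x z)
        = ∫⁻ x in K, ENNReal.ofReal (|u z - u x| ^ p / ‖z - x‖ ^ ((N:ℝ) + p * s)) := by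
          simp_rw [hGsymm]
      _ ≤ ∫⁻ x, ENNReal.ofReal (|u z - u x| ^ p / ‖z - x‖ ^ ((N:ℝ) + p * s)) :=
          setLIntegral_le_lintegral _ _
      _ = Dsp N s p u z := rfl
  -- step 4: the lower-order term
  have step4 : W * ENNReal.ofReal (R ^ (-(p * s))) =
      ∫⁻ z in A, ENNReal.ofReal (|u z| ^ p / R ^ (p * s)) := by
    rw [hW, ← lintegral_mul_const _ (by fun_prop)]
    refine lintegral_congr fun z => ?_
    rw [← ENNReal.ofReal_mul (by positivity)]
    congr 1
    rw [Real.rpow_neg hR.le, div_eq_mul_inv]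
  have hDspJ : (∫⁻ z in A, Dsp N s p u z) ≤ J := by
    rw [hJ]; exact lintegral_mono fun z => le_self_add
  have hWJ : (∫⁻ z in A, ENNReal.ofReal (|u z| ^ p / R ^ (p * s))) ≤ J := by
    rw [hJ]; exact lintegral_mono fun z => le_add_self
  -- combine
  have main : volume A * T ≤ D * J := by
    calc volume A * T ≤
        ENNReal.ofReal c1 * (∫⁻ x in K, ∫⁻ z in A, G x z) +
          ENNReal.ofReal ((2:ℝ) ^ p) * W *
            (∫⁻ x in K, ENNReal.ofReal (‖x‖ ^ (-α))) := step2
      _ ≤ ENNReal.ofReal c1 * J +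
          ENNReal.ofReal ((2:ℝ) ^ p) * W * (ENNReal.ofReal (R ^ (-(p * s))) * S1) := by
          refine add_le_add (mul_le_mul_right ?_ _) (mul_le_mul_right ?_ _)
          · rw [swap]; exact le_trans step3 hDspJ
          · rw [hK, hscale R hR]
      _ = ENNReal.ofReal c1 * J +
          ENNReal.ofReal ((2:ℝ) ^ p) * S1 * (W * ENNReal.ofReal (R ^ (-(p * s)))) := by
          ring
      _ ≤ ENNReal.ofReal c1 * J + ENNReal.ofReal ((2:ℝ) ^ p) * S1 * J := by
          refine add_le_add le_rfl (mul_le_mul_right ?_ _)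
          rw [step4]; exact hWJ
      _ = D * J := by rw [hD]; ring
  -- compute the measure of the annulus
  have hvolA : volume A = k * ENNReal.ofReal (R ^ (N : ℝ)) := by
    have hsub : ball (0 : E) (2 * R) ⊆ ball (0 : E) (3 * R) :=
      ball_subset_ball (by linarith)
    have h2 : volume (ball (0 : E) (2 * R)) = ENNReal.ofReal ((2 * R) ^ N) * v := by
      rw [hv, Measure.addHaar_ball volume 0 (by linarith : (0:ℝ) ≤ 2 * R), hNfr]
    have h3 : volume (ball (0 : E) (3 * R)) = ENNReal.ofReal ((3 * R) ^ N) * v := by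
      rw [hv, Measure.addHaar_ball volume 0 (by linarith : (0:ℝ) ≤ 3 * R), hNfr]
    have h2t : volume (ball (0 : E) (2 * R)) ≠ ⊤ := measure_ball_lt_top.ne
    have hdiff : (3 * R) ^ N - (2 * R) ^ N = cN * R ^ N := by
      rw [hcN, mul_pow, mul_pow]; ring
    rw [hA, measure_diff hsub measurableSet_ball.nullMeasurableSet h2t, h2, h3,
      ← ENNReal.sub_mul (fun _ _ => hvt), ← ENNReal.ofReal_sub _ (by positivity),
      hdiff, ENNReal.ofReal_mul hcN0.le, hk, Real.rpow_natCast]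
    ring
  -- conclude
  have hmul : k * (ENNReal.ofReal (R ^ (N : ℝ)) * T) ≤ D * J := by
    rw [← mul_assoc, ← hvolA]; exact main
  have hX : ENNReal.ofReal (R ^ (N : ℝ)) * T ≤ D * J / k := by
    rw [ENNReal.le_div_iff_mul_le (Or.inl hk0) (Or.inl hkt), mul_comm]
    exact hmul
  refine le_trans hX ?_
  have hDJ : D * J / k = D / k * J := by
    rw [div_eq_mul_inv, div_eq_mul_inv, mul_right_comm]
  rw [hDJ]
  refine mul_le_mul_left ?_ _
  calc D / k = ENNReal.ofReal ((D / k).toReal) := (ENNReal.ofReal_toReal hDk).symm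
    _ ≤ ENNReal.ofReal ((D / k).toReal + 1) := ENNReal.ofReal_le_ofReal (by linarith)
end

section
/- Let g : ℝ → ℝ be absolutely continuous and non-decreasing, p > 1, and define G(t) := ∫_0^t g'(τ)^{1/p} dτ. Then for every u ∈ Ẇ^{s,p}(ℝ^N), [G(u)]_{s,p}^p ≤ ⟨(-Δ_p)^s u, g(u)⟩, i.e. ∫∫ |G(u(x))-G(u(y))|^p/|x-y|^{N+ps} dx dy ≤ ∫∫ |u(x)-u(y)|^{p-2}(u(x)-u(y))(g(u(x))-g(u(y)))/|x-y|^{N+ps} dx dy. -/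
open MeasureTheory intervalIntegral
open scoped ENNReal

private lemma stmt8_key_le {p : ℝ} (hp : 1 < p) (g g' G : ℝ → ℝ)
    (hg'nonneg : ∀ t, 0 ≤ g' t)
    (hg'int : ∀ a b : ℝ, IntervalIntegrable g' volume a b)
    (hFTC : ∀ a b : ℝ, g b - g a = ∫ τ in a..b, g' τ)
    (hG : ∀ t : ℝ, G t = ∫ τ in (0:ℝ)..t, (g' τ) ^ (1 / p))
    {a b : ℝ} (hba : b ≤ a) :
    |G a - G b| ^ p ≤ |a - b| ^ (p - 2) * (a - b) * (g a - g b) := by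
  have hp0 : (0:ℝ) < p := lt_trans one_pos hp
  have hpq : p.HolderConjugate (p / (p - 1)) := Real.HolderConjugate.conjExponent hp
  set q : ℝ := p / (p - 1) with hq
  have hq0 : 0 < q := hpq.symm.pos
  have hcont : Continuous (fun x : ℝ => x ^ (1/p)) :=
    Real.continuous_rpow_const (by positivity)
  have hfint : ∀ c d : ℝ, IntervalIntegrable (fun τ => g' τ ^ (1/p)) volume c d := by
    intro c d
    refine IntervalIntegrable.mono_fun' (g := fun τ => 1 + g' τ)
      (intervalIntegrable_const.add (hg'int c d))
      (hcont.comp_aestronglyMeasurable (hg'int c d).def'.aestronglyMeasurable) ?_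
    filter_upwards with τ
    rw [Real.norm_eq_abs, abs_of_nonneg (Real.rpow_nonneg (hg'nonneg τ) _)]
    rcases le_total (g' τ) 1 with h | h
    · calc g' τ ^ (1/p) ≤ (1:ℝ) ^ (1/p) :=
            Real.rpow_le_rpow (hg'nonneg τ) h (by positivity)
        _ = 1 := Real.one_rpow _
        _ ≤ 1 + g' τ := le_add_of_nonneg_right (hg'nonneg τ)
    · calc g' τ ^ (1/p) ≤ g' τ ^ (1:ℝ) :=
            Real.rpow_le_rpow_of_exponent_le h (by
              rw [div_le_one hp0]; exact hp.le)
        _ = g' τ := Real.rpow_one _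
        _ ≤ 1 + g' τ := le_add_of_nonneg_left one_pos.le
  have hGab : G a - G b = ∫ τ in b..a, g' τ ^ (1/p) := by
    rw [hG a, hG b, intervalIntegral.integral_interval_sub_left (hfint 0 a) (hfint 0 b)]
  rcases eq_or_lt_of_le hba with rfl | hab0
  · simp [Real.zero_rpow hp0.ne']
  have hab : 0 < a - b := sub_pos.mpr hab0
  rw [intervalIntegral.integral_of_le hba] at hGab
  have hgab : g a - g b = ∫ τ in Set.Ioc b a, g' τ := by
    rw [hFTC b a, intervalIntegral.integral_of_le hba]
  set μ := volume.restrict (Set.Ioc b a) with hμ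
  have hg'i : Integrable g' μ := (hg'int b a).1
  have hfsm : AEStronglyMeasurable (fun τ => g' τ ^ (1/p)) μ :=
    hcont.comp_aestronglyMeasurable hg'i.aestronglyMeasurable
  have hfm : AEMeasurable (fun τ => ENNReal.ofReal (g' τ ^ (1/p))) μ :=
    ENNReal.measurable_ofReal.comp_aemeasurable hfsm.aemeasurable
  set A : ℝ := ∫ τ, g' τ ∂μ with hA
  have hA0 : 0 ≤ A := integral_nonneg fun τ => hg'nonneg τ
  set I : ℝ := ∫ τ, g' τ ^ (1/p) ∂μ with hIdef
  have hI0 : 0 ≤ I := integral_nonneg fun τ => Real.rpow_nonneg (hg'nonneg τ) _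
  -- Hölder
  have hold := ENNReal.lintegral_mul_le_Lp_mul_Lq μ hpq
    (f := fun τ => ENNReal.ofReal (g' τ ^ (1/p))) (g := fun _ => 1) hfm aemeasurable_const
  simp only [Pi.mul_apply, mul_one, ENNReal.one_rpow, lintegral_one] at hold
  have hpt : ∀ τ : ℝ, ENNReal.ofReal (g' τ ^ (1/p)) ^ p = ENNReal.ofReal (g' τ) := by
    intro τ
    rw [ENNReal.ofReal_rpow_of_nonneg (Real.rpow_nonneg (hg'nonneg τ) _) hp0.le,
      ← Real.rpow_mul (hg'nonneg τ), one_div, inv_mul_cancel₀ hp0.ne', Real.rpow_one]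
  have h1 : (∫⁻ τ, ENNReal.ofReal (g' τ ^ (1/p)) ^ p ∂μ) = ENNReal.ofReal A := by
    rw [hA, MeasureTheory.ofReal_integral_eq_lintegral_ofReal hg'i
      (Filter.Eventually.of_forall hg'nonneg)]
    exact lintegral_congr fun τ => hpt τ
  have h2 : μ Set.univ = ENNReal.ofReal (a - b) := by
    rw [hμ, Measure.restrict_apply_univ, Real.volume_Ioc]
  rw [h1, h2] at hold
  have hIeq : I = (∫⁻ τ, ENNReal.ofReal (g' τ ^ (1/p)) ∂μ).toReal := by
    rw [hIdef]
    exact integral_eq_lintegral_of_nonneg_ae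
      (Filter.Eventually.of_forall fun τ => Real.rpow_nonneg (hg'nonneg τ) _) hfsm
  have hRne : (ENNReal.ofReal A) ^ (1/p) * (ENNReal.ofReal (a - b)) ^ (1/q) ≠ ⊤ :=
    ENNReal.mul_ne_top
      (ENNReal.rpow_ne_top_of_nonneg (by positivity) ENNReal.ofReal_ne_top)
      (ENNReal.rpow_ne_top_of_nonneg (by positivity) ENNReal.ofReal_ne_top)
  have hIle : I ≤ A ^ (1/p) * (a - b) ^ (1/q) := by
    rw [hIeq]
    calc (∫⁻ τ, ENNReal.ofReal (g' τ ^ (1/p)) ∂μ).toReal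
        ≤ ((ENNReal.ofReal A) ^ (1/p) * (ENNReal.ofReal (a - b)) ^ (1/q)).toReal :=
          ENNReal.toReal_mono hRne hold
      _ = A ^ (1/p) * (a - b) ^ (1/q) := by
          rw [ENNReal.toReal_mul,
            ENNReal.ofReal_rpow_of_nonneg hA0 (by positivity),
            ENNReal.ofReal_rpow_of_nonneg hab.le (by positivity),
            ENNReal.toReal_ofReal (by positivity), ENNReal.toReal_ofReal (by positivity)]
  have habs : |G a - G b| = I := by rw [hGab, abs_of_nonneg hI0]
  have hpow : I ^ p ≤ A * (a - b) ^ (p - 1) := by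
    calc I ^ p ≤ (A ^ (1/p) * (a - b) ^ (1/q)) ^ p :=
          Real.rpow_le_rpow hI0 hIle hp0.le
      _ = (A ^ (1/p)) ^ p * ((a - b) ^ (1/q)) ^ p :=
          Real.mul_rpow (by positivity) (by positivity)
      _ = A * (a - b) ^ (p - 1) := by
          rw [← Real.rpow_mul hA0, ← Real.rpow_mul hab.le]
          rw [one_div, inv_mul_cancel₀ hp0.ne', Real.rpow_one]
          congr 1
          rw [one_div, inv_mul_eq_div, ← hpq.div_conj_eq_sub_one]
  have hsplit : (a - b) ^ (p - 1) = (a - b) ^ (p - 2) * (a - b) := by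
    rw [show p - 1 = (p - 2) + 1 by ring, Real.rpow_add hab, Real.rpow_one]
  calc |G a - G b| ^ p = I ^ p := by rw [habs]
    _ ≤ A * (a - b) ^ (p - 1) := hpow
    _ = |a - b| ^ (p - 2) * (a - b) * (g a - g b) := by
        rw [hgab, hsplit, abs_of_pos hab]; ring

private lemma stmt8_key {p : ℝ} (hp : 1 < p) (g g' G : ℝ → ℝ)
    (hg'nonneg : ∀ t, 0 ≤ g' t)
    (hg'int : ∀ a b : ℝ, IntervalIntegrable g' volume a b)
    (hFTC : ∀ a b : ℝ, g b - g a = ∫ τ in a..b, g' τ)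
    (hG : ∀ t : ℝ, G t = ∫ τ in (0:ℝ)..t, (g' τ) ^ (1 / p))
    (a b : ℝ) :
    |G a - G b| ^ p ≤ |a - b| ^ (p - 2) * (a - b) * (g a - g b) := by
  rcases le_total b a with h | h
  · exact stmt8_key_le hp g g' G hg'nonneg hg'int hFTC hG h
  · calc |G a - G b| ^ p = |G b - G a| ^ p := by rw [abs_sub_comm]
      _ ≤ |b - a| ^ (p - 2) * (b - a) * (g b - g a) :=
          stmt8_key_le hp g g' G hg'nonneg hg'int hFTC hG h
      _ = |a - b| ^ (p - 2) * (a - b) * (g a - g b) := by rw [abs_sub_comm]; ring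

/-- If `g` is absolutely continuous and non-decreasing (encoded via a nonnegative density
`g'` with `g b - g a = ∫_a^b g'`), and `G(t) = ∫_0^t g'(τ)^{1/p} dτ`, then
`[G(u)]_{s,p}^p ≤ ⟨(-Δ_p)^s u, g(u)⟩` for every `u ∈ Ẇ^{s,p}(ℝ^N)`. -/
theorem stmt8 (N : ℕ) (s p : ℝ) (hp : 1 < p) (hs0 : 0 < s) (hs1 : s < 1)
    (g g' G : ℝ → ℝ)
    (hg'nonneg : ∀ t, 0 ≤ g' t)
    (hg'int : ∀ a b : ℝ, IntervalIntegrable g' MeasureTheory.volume a b)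
    (hFTC : ∀ a b : ℝ, g b - g a = ∫ τ in a..b, g' τ)
    (hG : ∀ t : ℝ, G t = ∫ τ in (0:ℝ)..t, (g' τ) ^ (1 / p))
    (u : EuclideanSpace ℝ (Fin N) → ℝ) (hu : Measurable u)
    (hufin : (∫⁻ x, ∫⁻ y,
        ENNReal.ofReal (|u x - u y| ^ p / ‖x - y‖ ^ ((N : ℝ) + p * s))) < ⊤) :
    (∫⁻ x, ∫⁻ y,
        ENNReal.ofReal (|G (u x) - G (u y)| ^ p / ‖x - y‖ ^ ((N : ℝ) + p * s))) ≤
      ∫⁻ x, ∫⁻ y, ENNReal.ofReal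
        ((|u x - u y| ^ (p - 2) * (u x - u y) * (g (u x) - g (u y))) /
          ‖x - y‖ ^ ((N : ℝ) + p * s)) := by
  refine lintegral_mono fun x => lintegral_mono fun y => ?_
  apply ENNReal.ofReal_le_ofReal
  have hc : 0 ≤ ‖x - y‖ ^ ((N : ℝ) + p * s) := Real.rpow_nonneg (norm_nonneg _) _
  have hkey := stmt8_key hp g g' G hg'nonneg hg'int hFTC hG (u x) (u y)
  exact div_le_div_of_nonneg_right hkey hc
end

section
/- Let λ ≥ 1 and let h : [0,∞) → [0,∞) be non-increasing and integrable. Then ∫_0^∞ h(t)^λ t^{λ−1} dt ≤ ( ∫_0^∞ h(t) dt )^λ. -/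
open MeasureTheory Set
open scoped ENNReal

/-- For `λ ≥ 1` and `h : [0,∞) → [0,∞)` non-increasing and integrable:
`∫_0^∞ h(t)^λ t^{λ−1} dt ≤ (∫_0^∞ h(t) dt)^λ`. -/
theorem stmt11 (lam : ℝ) (h : ℝ → ℝ) (hlam : 1 ≤ lam)
    (hnonneg : ∀ t, 0 ≤ h t) (hanti : AntitoneOn h (Ici 0))
    (hint : IntegrableOn h (Ioi 0)) :
    (∫⁻ t in Ioi (0 : ℝ), ENNReal.ofReal (h t ^ lam * t ^ (lam - 1))) ≤
      (∫⁻ t in Ioi (0 : ℝ), ENNReal.ofReal (h t)) ^ lam := by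
  set A : ℝ := ∫ t in Ioi (0 : ℝ), h t with hA
  have hA0 : 0 ≤ A := setIntegral_nonneg measurableSet_Ioi fun t _ => hnonneg t
  have hl1 : (0 : ℝ) ≤ lam - 1 := by linarith
  -- key pointwise bound
  have key : ∀ t ∈ Ioi (0 : ℝ), h t ^ lam * t ^ (lam - 1) ≤ A ^ (lam - 1) * h t := by
    intro t ht
    have ht0 : (0 : ℝ) < t := ht
    have hbound : h t * t ≤ A := by
      have h1 : h t * t = ∫ s in Ioc (0 : ℝ) t, h t := by
        rw [setIntegral_const]
        simp [Real.volume_Ioc, ENNReal.toReal_ofReal ht0.le, mul_comm]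
        rw [max_eq_left ht0.le, mul_comm]
      have h2 : (∫ s in Ioc (0 : ℝ) t, h t) ≤ ∫ s in Ioc (0 : ℝ) t, h s := by
        apply setIntegral_mono_on (integrableOn_const (by simp [Real.volume_Ioc]) (by simp))
          (hint.mono_set Ioc_subset_Ioi_self) measurableSet_Ioc
        intro s hs
        exact hanti hs.1.le ht0.le hs.2
      have h3 : (∫ s in Ioc (0 : ℝ) t, h s) ≤ A := by
        apply setIntegral_mono_set hint
          (Filter.Eventually.of_forall fun s => hnonneg s)
        exact HasSubset.Subset.eventuallyLE Ioc_subset_Ioi_self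
      linarith [h1 ▸ h2.trans h3]
    calc h t ^ lam * t ^ (lam - 1)
        = (h t * t) ^ (lam - 1) * h t := by
          rw [Real.mul_rpow (hnonneg t) ht0.le]
          have e : h t ^ (lam - 1) * h t ^ (1 : ℝ) = h t ^ lam := by
            rw [← Real.rpow_add' (hnonneg t) (ne_of_gt (by linarith))]
            norm_num
          rw [← e, Real.rpow_one]; ring
      _ ≤ A ^ (lam - 1) * h t := by
          exact mul_le_mul_of_nonneg_right
            (Real.rpow_le_rpow (mul_nonneg (hnonneg t) ht0.le) hbound hl1) (hnonneg t)
  have step1 : (∫⁻ t in Ioi (0 : ℝ), ENNReal.ofReal (h t ^ lam * t ^ (lam - 1))) ≤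
      ∫⁻ t in Ioi (0 : ℝ), ENNReal.ofReal (A ^ (lam - 1)) * ENNReal.ofReal (h t) := by
    refine lintegral_mono_ae ?_
    filter_upwards [(ae_restrict_iff' measurableSet_Ioi).2
      (Filter.Eventually.of_forall key)] with t ht
    rw [← ENNReal.ofReal_mul (Real.rpow_nonneg hA0 _)]
    exact ENNReal.ofReal_le_ofReal ht
  have step2 : (∫⁻ t in Ioi (0 : ℝ), ENNReal.ofReal (A ^ (lam - 1)) * ENNReal.ofReal (h t))
      = ENNReal.ofReal (A ^ (lam - 1)) * ENNReal.ofReal A := by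
    rw [lintegral_const_mul' _ _ ENNReal.ofReal_ne_top,
      ← ofReal_integral_eq_lintegral_ofReal hint
        ((ae_restrict_iff' measurableSet_Ioi).2 (Filter.Eventually.of_forall fun t _ => hnonneg t))]
  have step3 : (∫⁻ t in Ioi (0 : ℝ), ENNReal.ofReal (h t)) = ENNReal.ofReal A := by
    rw [← ofReal_integral_eq_lintegral_ofReal hint
      ((ae_restrict_iff' measurableSet_Ioi).2 (Filter.Eventually.of_forall fun t _ => hnonneg t))]
  rw [step3]
  refine (step1.trans_eq step2).trans_eq ?_
  rw [← ENNReal.ofReal_rpow_of_nonneg hA0 hl1]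
  nth_rewrite 2 [← ENNReal.rpow_one (ENNReal.ofReal A)]
  rw [← ENNReal.rpow_add_of_nonneg _ _ hl1 zero_le_one]
  congr 1
  ring
end
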